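/- (Hoffman–Wielandt for symmetric matrices) For real symmetric N×N matrices A and B with eigenvalues λ_1(A) ≥ … ≥ λ_N(A) and λ_1(B) ≥ … ≥ λ_N(B) sorted in non-increasing order, Σ_i (λ_i(A) − λ_i(B))² ≤ ‖A − B‖_F². -/

import Mathlib

open Matrix

lemma card_le_filter {N k : ℕ} :
    (Finset.filter (fun i : Fin N => (i : ℕ) ≤ k) Finset.univ).card ≤ k + 1 := by
  classical
  rw [← Finset.card_range (k+1)]
  refine Finset.card_le_card_of_injOn (fun i => (i : ℕ)) ?_ ?_
  · intro i hi
    simp only [Finset.mem_coe, Finset.mem_filter] at hi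
    exact Finset.mem_range.2 (Nat.lt_succ_of_le hi.2)
  · intro i _ j _ h
    exact Fin.ext h

lemma card_filter_eq {N m : ℕ} (hm : m < N) :
    (Finset.filter (fun i : Fin N => (i : ℕ) ≤ m) Finset.univ).card = m + 1 := by
  classical
  rw [← Finset.card_range (m+1)]
  refine Finset.card_bij (fun i _ => (i : ℕ)) ?_ ?_ ?_
  · intro i hi
    simp only [Finset.mem_filter] at hi
    exact Finset.mem_range.2 (Nat.lt_succ_of_le hi.2)
  · intro i _ j _ h; exact Fin.ext h
  · intro n hn
    have hn' := Finset.mem_range.1 hn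
    refine ⟨⟨n, lt_of_le_of_lt (Nat.le_of_lt_succ hn') hm⟩, ?_, rfl⟩
    simp [Nat.le_of_lt_succ hn']

lemma ds_rearrange_nonneg {N : ℕ} (a b : Fin N → ℝ)
    (ha : Antitone a) (hb : Antitone b) (ha0 : ∀ i, 0 ≤ a i) (hb0 : ∀ i, 0 ≤ b i)
    (s : Matrix (Fin N) (Fin N) ℝ) (hs : ∀ i j, 0 ≤ s i j)
    (hrow : ∀ i, ∑ j, s i j = 1) (hcol : ∀ j, ∑ i, s i j = 1) :
    ∑ i, ∑ j, a i * b j * s i j ≤ ∑ i, a i * b i := by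
  classical
  set aN : ℕ → ℝ := fun n => if h : n < N then a ⟨n, h⟩ else 0 with haN
  set bN : ℕ → ℝ := fun n => if h : n < N then b ⟨n, h⟩ else 0 with hbN
  set d : ℕ → ℝ := fun k => aN k - aN (k+1) with hd
  set e : ℕ → ℝ := fun k => bN k - bN (k+1) with he
  have haN0 : ∀ k, 0 ≤ aN k := by
    intro k; simp only [haN]; split_ifs with h
    · exact ha0 _
    · exact le_refl 0
  have hbN0 : ∀ k, 0 ≤ bN k := by
    intro k; simp only [hbN]; split_ifs with h
    · exact hb0 _
    · exact le_refl 0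
  have hd0 : ∀ k, 0 ≤ d k := by
    intro k
    simp only [hd, haN, sub_nonneg]
    split_ifs with h1 h2 h3
    · exact ha (Fin.mk_le_mk.2 (Nat.le_succ k))
    · exact absurd (by omega : k < N) h2
    · exact ha0 _
    · exact le_refl 0
  have he0 : ∀ k, 0 ≤ e k := by
    intro k
    simp only [he, hbN, sub_nonneg]
    split_ifs with h1 h2 h3
    · exact hb (Fin.mk_le_mk.2 (Nat.le_succ k))
    · exact absurd (by omega : k < N) h2
    · exact hb0 _
    · exact le_refl 0
  -- key identity: a i = sum of d over k ≥ i
  have key : ∀ i : Fin N, a i = ∑ k ∈ Finset.range N, (if (i:ℕ) ≤ k then d k else 0) := by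
    intro i
    have h1 : ∀ k, (if (i:ℕ) ≤ k then d k else 0) = aN (max k (i:ℕ)) - aN (max (k+1) (i:ℕ)) := by
      intro k
      split_ifs with h
      · rw [max_eq_left h, max_eq_left (by omega)]
      · rw [max_eq_right (by omega), max_eq_right (by omega), sub_self]
    calc a i = aN (max 0 (i:ℕ)) - aN (max N (i:ℕ)) := by
              simp only [haN, Nat.zero_max, max_eq_left i.is_lt.le]
              rw [dif_pos i.is_lt, dif_neg (by omega), sub_zero]
      _ = ∑ k ∈ Finset.range N, (aN (max k (i:ℕ)) - aN (max (k+1) (i:ℕ))) :=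
          (Finset.sum_range_sub' (fun k => aN (max k (i:ℕ))) N).symm
      _ = ∑ k ∈ Finset.range N, (if (i:ℕ) ≤ k then d k else 0) := by
          exact Finset.sum_congr rfl (fun k _ => (h1 k).symm)
  have keyb : ∀ j : Fin N, b j = ∑ l ∈ Finset.range N, (if (j:ℕ) ≤ l then e l else 0) := by
    intro j
    have h1 : ∀ l, (if (j:ℕ) ≤ l then e l else 0) = bN (max l (j:ℕ)) - bN (max (l+1) (j:ℕ)) := by
      intro l
      split_ifs with h
      · rw [max_eq_left h, max_eq_left (by omega)]
      · rw [max_eq_right (by omega), max_eq_right (by omega), sub_self]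
    calc b j = bN (max 0 (j:ℕ)) - bN (max N (j:ℕ)) := by
              simp only [hbN, Nat.zero_max, max_eq_left j.is_lt.le]
              rw [dif_pos j.is_lt, dif_neg (by omega), sub_zero]
      _ = ∑ l ∈ Finset.range N, (bN (max l (j:ℕ)) - bN (max (l+1) (j:ℕ))) :=
          (Finset.sum_range_sub' (fun l => bN (max l (j:ℕ))) N).symm
      _ = ∑ l ∈ Finset.range N, (if (j:ℕ) ≤ l then e l else 0) := by
          exact Finset.sum_congr rfl (fun l _ => (h1 l).symm)
  -- define T and C
  set T : ℕ → ℕ → ℝ := fun k l => ∑ i : Fin N, ∑ j : Fin N,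
      (if (i:ℕ) ≤ k ∧ (j:ℕ) ≤ l then s i j else 0) with hT
  set C : ℕ → ℕ → ℝ := fun k l => ∑ i : Fin N,
      (if (i:ℕ) ≤ k ∧ (i:ℕ) ≤ l then (1:ℝ) else 0) with hC
  have ite_mul_lemma : ∀ (P Q : Prop) [Decidable P] [Decidable Q] (x y z : ℝ),
      (if P then x else 0) * (if Q then y else 0) * z
        = x * y * (if P ∧ Q then z else 0) := by
    intro P Q _ _ x y z
    by_cases hP : P <;> by_cases hQ : Q <;> simp [hP, hQ] <;> ring
  have LHS_eq : ∑ i, ∑ j, a i * b j * s i j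
      = ∑ k ∈ Finset.range N, ∑ l ∈ Finset.range N, d k * e l * T k l := by
    have step1 : ∑ i, ∑ j, a i * b j * s i j
        = ∑ i : Fin N, ∑ j : Fin N, ∑ k ∈ Finset.range N, ∑ l ∈ Finset.range N,
            d k * e l * (if (i:ℕ) ≤ k ∧ (j:ℕ) ≤ l then s i j else 0) := by
      refine Finset.sum_congr rfl (fun i _ => Finset.sum_congr rfl (fun j _ => ?_))
      rw [key i, keyb j, Finset.sum_mul_sum, Finset.sum_mul]
      refine Finset.sum_congr rfl (fun k _ => ?_)
      rw [Finset.sum_mul]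
      exact Finset.sum_congr rfl (fun l _ => ite_mul_lemma _ _ _ _ _)
    rw [step1]
    calc ∑ i : Fin N, ∑ j : Fin N, ∑ k ∈ Finset.range N, ∑ l ∈ Finset.range N,
            d k * e l * (if (i:ℕ) ≤ k ∧ (j:ℕ) ≤ l then s i j else 0)
        = ∑ i : Fin N, ∑ k ∈ Finset.range N, ∑ j : Fin N, ∑ l ∈ Finset.range N,
            d k * e l * (if (i:ℕ) ≤ k ∧ (j:ℕ) ≤ l then s i j else 0) :=
          Finset.sum_congr rfl (fun i _ => Finset.sum_comm)
      _ = ∑ k ∈ Finset.range N, ∑ i : Fin N, ∑ j : Fin N, ∑ l ∈ Finset.range N,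
            d k * e l * (if (i:ℕ) ≤ k ∧ (j:ℕ) ≤ l then s i j else 0) :=
          Finset.sum_comm
      _ = ∑ k ∈ Finset.range N, ∑ i : Fin N, ∑ l ∈ Finset.range N, ∑ j : Fin N,
            d k * e l * (if (i:ℕ) ≤ k ∧ (j:ℕ) ≤ l then s i j else 0) :=
          Finset.sum_congr rfl (fun k _ => Finset.sum_congr rfl (fun i _ => Finset.sum_comm))
      _ = ∑ k ∈ Finset.range N, ∑ l ∈ Finset.range N, ∑ i : Fin N, ∑ j : Fin N,
            d k * e l * (if (i:ℕ) ≤ k ∧ (j:ℕ) ≤ l then s i j else 0) :=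
          Finset.sum_congr rfl (fun k _ => Finset.sum_comm)
      _ = ∑ k ∈ Finset.range N, ∑ l ∈ Finset.range N, d k * e l * T k l := by
          refine Finset.sum_congr rfl (fun k _ => Finset.sum_congr rfl (fun l _ => ?_))
          simp only [hT, Finset.mul_sum]
  have RHS_eq : ∑ i, a i * b i
      = ∑ k ∈ Finset.range N, ∑ l ∈ Finset.range N, d k * e l * C k l := by
    have step1 : ∑ i, a i * b i
        = ∑ i : Fin N, ∑ k ∈ Finset.range N, ∑ l ∈ Finset.range N,
            d k * e l * (if (i:ℕ) ≤ k ∧ (i:ℕ) ≤ l then (1:ℝ) else 0) := by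
      refine Finset.sum_congr rfl (fun i _ => ?_)
      rw [key i, keyb i, Finset.sum_mul_sum]
      refine Finset.sum_congr rfl (fun k _ => Finset.sum_congr rfl (fun l _ => ?_))
      rw [← mul_one ((if (i:ℕ) ≤ k then d k else 0) * (if (i:ℕ) ≤ l then e l else 0))]
      exact ite_mul_lemma _ _ _ _ _
    rw [step1]
    calc ∑ i : Fin N, ∑ k ∈ Finset.range N, ∑ l ∈ Finset.range N,
            d k * e l * (if (i:ℕ) ≤ k ∧ (i:ℕ) ≤ l then (1:ℝ) else 0)
        = ∑ k ∈ Finset.range N, ∑ i : Fin N, ∑ l ∈ Finset.range N,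
            d k * e l * (if (i:ℕ) ≤ k ∧ (i:ℕ) ≤ l then (1:ℝ) else 0) :=
          Finset.sum_comm
      _ = ∑ k ∈ Finset.range N, ∑ l ∈ Finset.range N, ∑ i : Fin N,
            d k * e l * (if (i:ℕ) ≤ k ∧ (i:ℕ) ≤ l then (1:ℝ) else 0) :=
          Finset.sum_congr rfl (fun k _ => Finset.sum_comm)
      _ = ∑ k ∈ Finset.range N, ∑ l ∈ Finset.range N, d k * e l * C k l := by
          refine Finset.sum_congr rfl (fun k _ => Finset.sum_congr rfl (fun l _ => ?_))
          simp only [hC, Finset.mul_sum]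
  have Tbound : ∀ k ∈ Finset.range N, ∀ l ∈ Finset.range N, T k l ≤ C k l := by
    intro k hk l hl
    have hk' := Finset.mem_range.1 hk
    have hl' := Finset.mem_range.1 hl
    have h1 : T k l ≤ (k:ℝ) + 1 := by
      calc T k l ≤ ∑ i : Fin N, (if (i:ℕ) ≤ k then (1:ℝ) else 0) := by
            rw [hT]
            refine Finset.sum_le_sum fun i _ => ?_
            calc ∑ j : Fin N, (if (i:ℕ) ≤ k ∧ (j:ℕ) ≤ l then s i j else 0)
                ≤ ∑ j : Fin N, (if (i:ℕ) ≤ k then s i j else 0) := by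
                  refine Finset.sum_le_sum fun j _ => ?_
                  split_ifs with h1 h2 h3 <;>
                    first | exact le_refl _ | exact hs i j | exact absurd h1.1 h2 | exact le_refl 0
              _ = if (i:ℕ) ≤ k then ∑ j : Fin N, s i j else 0 := by
                  split_ifs with h <;> simp [h]
              _ = if (i:ℕ) ≤ k then (1:ℝ) else 0 := by
                  split_ifs with h <;> simp [hrow i]
        _ = ((Finset.filter (fun i : Fin N => (i:ℕ) ≤ k) Finset.univ).card : ℝ) :=
            Finset.sum_boole _ _
        _ ≤ (k:ℝ) + 1 := by exact_mod_cast (card_le_filter (N := N) (k := k))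
    have h2 : T k l ≤ (l:ℝ) + 1 := by
      calc T k l = ∑ j : Fin N, ∑ i : Fin N, (if (i:ℕ) ≤ k ∧ (j:ℕ) ≤ l then s i j else 0) := by
            rw [hT]; exact Finset.sum_comm
        _ ≤ ∑ j : Fin N, (if (j:ℕ) ≤ l then (1:ℝ) else 0) := by
            refine Finset.sum_le_sum fun j _ => ?_
            calc ∑ i : Fin N, (if (i:ℕ) ≤ k ∧ (j:ℕ) ≤ l then s i j else 0)
                ≤ ∑ i : Fin N, (if (j:ℕ) ≤ l then s i j else 0) := by
                  refine Finset.sum_le_sum fun i _ => ?_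
                  split_ifs with h1 h2 h3 <;>
                    first | exact le_refl _ | exact hs i j | exact absurd h1.2 h2 | exact le_refl 0
              _ = if (j:ℕ) ≤ l then ∑ i : Fin N, s i j else 0 := by
                  split_ifs with h <;> simp [h]
              _ = if (j:ℕ) ≤ l then (1:ℝ) else 0 := by
                  split_ifs with h <;> simp [hcol j]
        _ = ((Finset.filter (fun j : Fin N => (j:ℕ) ≤ l) Finset.univ).card : ℝ) :=
            Finset.sum_boole _ _
        _ ≤ (l:ℝ) + 1 := by exact_mod_cast (card_le_filter (N := N) (k := l))
    have hCval : C k l = (min k l : ℝ) + 1 := by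
      have hiff : ∀ i : Fin N, ((i:ℕ) ≤ k ∧ (i:ℕ) ≤ l) ↔ (i:ℕ) ≤ min k l := by
        intro i; omega
      calc C k l = ∑ i : Fin N, (if (i:ℕ) ≤ min k l then (1:ℝ) else 0) := by
            rw [hC]
            exact Finset.sum_congr rfl (fun i _ => by rw [if_congr (hiff i) rfl rfl])
        _ = ((Finset.filter (fun i : Fin N => (i:ℕ) ≤ min k l) Finset.univ).card : ℝ) :=
            Finset.sum_boole _ _
        _ = (min k l : ℝ) + 1 := by
            rw [card_filter_eq (lt_of_le_of_lt (min_le_left k l) hk')]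
            push_cast; ring
    rw [hCval]
    rcases le_total k l with h | h
    · have hm : min (k:ℝ) (l:ℝ) = (k : ℝ) := min_eq_left (by exact_mod_cast h)
      rw [hm]; exact h1
    · have hm : min (k:ℝ) (l:ℝ) = (l : ℝ) := min_eq_right (by exact_mod_cast h)
      rw [hm]; exact h2
  rw [LHS_eq, RHS_eq]
  refine Finset.sum_le_sum fun k hk => Finset.sum_le_sum fun l hl => ?_
  exact mul_le_mul_of_nonneg_left (Tbound k hk l hl) (mul_nonneg (hd0 k) (he0 l))

lemma ds_rearrange {N : ℕ} (a b : Fin N → ℝ)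
    (ha : Antitone a) (hb : Antitone b)
    (s : Matrix (Fin N) (Fin N) ℝ) (hs : ∀ i j, 0 ≤ s i j)
    (hrow : ∀ i, ∑ j, s i j = 1) (hcol : ∀ j, ∑ i, s i j = 1) :
    ∑ i, ∑ j, a i * b j * s i j ≤ ∑ i, a i * b i := by
  classical
  rcases Nat.eq_zero_or_pos N with hN | hN
  · subst hN; simp
  set L : Fin N := ⟨N-1, by omega⟩ with hL
  have hlast : ∀ i : Fin N, i ≤ L := by
    intro i
    rw [Fin.le_def]
    have := i.is_lt
    simp only [hL]
    omega
  set cA : ℝ := a L with hcA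
  set cB : ℝ := b L with hcB
  set a' : Fin N → ℝ := fun i => a i - cA with ha'
  set b' : Fin N → ℝ := fun i => b i - cB with hb'
  have ha'anti : Antitone a' := fun i j hij => by
    simp only [ha']; exact sub_le_sub_right (ha hij) cA
  have hb'anti : Antitone b' := fun i j hij => by
    simp only [hb']; exact sub_le_sub_right (hb hij) cB
  have ha'0 : ∀ i, 0 ≤ a' i := fun i => sub_nonneg.2 (ha (hlast i))
  have hb'0 : ∀ i, 0 ≤ b' i := fun i => sub_nonneg.2 (hb (hlast i))
  have main := ds_rearrange_nonneg a' b' ha'anti hb'anti ha'0 hb'0 s hs hrow hcol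
  have expand : ∀ i j : Fin N, a i * b j * s i j
      = a' i * b' j * s i j + cA * (b' j * s i j) + cB * (a' i * s i j) + cA * cB * s i j := by
    intro i j; simp only [ha', hb']; ring
  have sum_s : ∑ i : Fin N, ∑ j : Fin N, s i j = N := by
    have : ∀ i : Fin N, ∑ j, s i j = 1 := hrow
    rw [Finset.sum_congr rfl (fun i _ => hrow i)]
    simp
  have t2 : ∑ i : Fin N, ∑ j : Fin N, cA * (b' j * s i j) = cA * ∑ j : Fin N, b' j := by
    simp only [← Finset.mul_sum]
    congr 1
    rw [Finset.sum_comm]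
    refine Finset.sum_congr rfl (fun j _ => ?_)
    rw [← Finset.mul_sum, hcol j, mul_one]
  have t3 : ∑ i : Fin N, ∑ j : Fin N, cB * (a' i * s i j) = cB * ∑ i : Fin N, a' i := by
    simp only [← Finset.mul_sum]
    congr 1
    refine Finset.sum_congr rfl (fun i _ => ?_)
    rw [hrow i, mul_one]
  have t4 : ∑ i : Fin N, ∑ j : Fin N, cA * cB * s i j = cA * cB * N := by
    calc ∑ i : Fin N, ∑ j : Fin N, cA * cB * s i j
        = cA * cB * ∑ i : Fin N, ∑ j : Fin N, s i j := by
          simp only [Finset.mul_sum]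
      _ = cA * cB * N := by rw [sum_s]
  have LHSsplit : ∑ i, ∑ j, a i * b j * s i j
      = (∑ i : Fin N, ∑ j : Fin N, a' i * b' j * s i j)
        + cA * (∑ j : Fin N, b' j) + cB * (∑ i : Fin N, a' i) + cA * cB * N := by
    calc ∑ i, ∑ j, a i * b j * s i j
        = ∑ i : Fin N, ∑ j : Fin N, (a' i * b' j * s i j + cA * (b' j * s i j)
            + cB * (a' i * s i j) + cA * cB * s i j) := by
          exact Finset.sum_congr rfl (fun i _ => Finset.sum_congr rfl (fun j _ => expand i j))
      _ = (∑ i : Fin N, ∑ j : Fin N, a' i * b' j * s i j)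
          + (∑ i : Fin N, ∑ j : Fin N, cA * (b' j * s i j))
          + (∑ i : Fin N, ∑ j : Fin N, cB * (a' i * s i j))
          + (∑ i : Fin N, ∑ j : Fin N, cA * cB * s i j) := by
          simp only [Finset.sum_add_distrib]
      _ = _ := by rw [t2, t3, t4]
  have RHSsplit : ∑ i, a i * b i
      = (∑ i : Fin N, a' i * b' i) + cA * (∑ i : Fin N, b' i) + cB * (∑ i : Fin N, a' i)
        + cA * cB * N := by
    calc ∑ i, a i * b i
        = ∑ i : Fin N, (a' i * b' i + cA * b' i + cB * a' i + cA * cB) := by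
          refine Finset.sum_congr rfl (fun i _ => ?_)
          simp only [ha', hb']; ring
      _ = (∑ i : Fin N, a' i * b' i) + (∑ i : Fin N, cA * b' i) + (∑ i : Fin N, cB * a' i)
          + (∑ _i : Fin N, cA * cB) := by
          simp only [Finset.sum_add_distrib]
      _ = _ := by
          rw [← Finset.mul_sum, ← Finset.mul_sum, Finset.sum_const, Finset.card_univ,
            Fintype.card_fin, nsmul_eq_mul]
          ring
  rw [LHSsplit, RHSsplit]
  linarith [main]

lemma spec_real {N : ℕ} (A : Matrix (Fin N) (Fin N) ℝ) (hA : A.IsHermitian) :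
    A = (hA.eigenvectorUnitary : Matrix (Fin N) (Fin N) ℝ) * diagonal hA.eigenvalues
      * star (hA.eigenvectorUnitary : Matrix (Fin N) (Fin N) ℝ) := by
  have h := hA.spectral_theorem
  simpa [RCLike.ofReal_real_eq_id, Function.comp] using h

noncomputable def frobNorm {m n : Type*} [Fintype m] [Fintype n]
    (A : Matrix m n ℝ) : ℝ :=
  Real.sqrt (∑ i, ∑ j, (A i j) ^ 2)

/-- Hoffman–Wielandt inequality for real symmetric matrices: if `μ` and `ν` enumerate
the eigenvalues (with multiplicity) of `A` and `B` in non-increasing order, then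
`∑ i (μ i - ν i)² ≤ ‖A - B‖_F²`. -/
theorem hoffman_wielandt_symmetric (N : ℕ)
    (A B : Matrix (Fin N) (Fin N) ℝ)
    (hA : A.IsHermitian) (hB : B.IsHermitian)
    (μ ν : Fin N → ℝ) (σ τ : Equiv.Perm (Fin N))
    (hμ : μ = hA.eigenvalues ∘ σ) (hν : ν = hB.eigenvalues ∘ τ)
    (hμ_sorted : Antitone μ) (hν_sorted : Antitone ν) :
    ∑ i : Fin N, (μ i - ν i) ^ 2 ≤ frobNorm (A - B) ^ 2 := by
  classical
  set U : Matrix (Fin N) (Fin N) ℝ := (hA.eigenvectorUnitary : Matrix (Fin N) (Fin N) ℝ) with hUdef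
  set V : Matrix (Fin N) (Fin N) ℝ := (hB.eigenvectorUnitary : Matrix (Fin N) (Fin N) ℝ) with hVdef
  set lam := hA.eigenvalues with hlam
  set kap := hB.eigenvalues with hkap
  have hAspec : A = U * diagonal lam * star U := spec_real A hA
  have hBspec : B = V * diagonal kap * star V := spec_real B hB
  have hU1 : star U * U = 1 := mem_unitaryGroup_iff'.1 hA.eigenvectorUnitary.2
  have hU2 : U * star U = 1 := mem_unitaryGroup_iff.1 hA.eigenvectorUnitary.2
  have hV1 : star V * V = 1 := mem_unitaryGroup_iff'.1 hB.eigenvectorUnitary.2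
  have hV2 : V * star V = 1 := mem_unitaryGroup_iff.1 hB.eigenvectorUnitary.2
  set W : Matrix (Fin N) (Fin N) ℝ := star U * V with hWdef
  have hstarW : star W = star V * U := by rw [hWdef, Matrix.star_mul, star_star]
  have hW2 : W * star W = 1 := by
    rw [hWdef, hstarW, Matrix.mul_assoc, ← Matrix.mul_assoc V, hV2, Matrix.one_mul, hU1]
  have hW1 : star W * W = 1 := by
    rw [hWdef, hstarW, Matrix.mul_assoc, ← Matrix.mul_assoc U, hU2, Matrix.one_mul, hV1]
  set s : Matrix (Fin N) (Fin N) ℝ := fun i j => (W i j) ^ 2 with hsdef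
  have hs : ∀ i j, 0 ≤ s i j := fun i j => sq_nonneg _
  have hrow : ∀ i, ∑ j, s i j = 1 := by
    intro i
    have h := congrFun (congrFun hW2 i) i
    rw [Matrix.mul_apply] at h
    simp only [Matrix.one_apply_eq] at h
    calc ∑ j, s i j = ∑ j, W i j * (star W) j i := by
          refine Finset.sum_congr rfl fun j _ => ?_
          simp [hsdef, Matrix.star_apply, sq]
      _ = 1 := h
  have hcol : ∀ j, ∑ i, s i j = 1 := by
    intro j
    have h := congrFun (congrFun hW1 j) j
    rw [Matrix.mul_apply] at h
    simp only [Matrix.one_apply_eq] at h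
    calc ∑ i, s i j = ∑ i, (star W) j i * W i j := by
          refine Finset.sum_congr rfl fun i _ => ?_
          simp [hsdef, Matrix.star_apply, sq]
      _ = 1 := h
  -- trace identities
  have tA : trace (A * A) = ∑ i, lam i ^ 2 := by
    rw [hAspec]
    have hmid : star U * (U * (diagonal lam * star U)) = diagonal lam * star U := by
      rw [← Matrix.mul_assoc, hU1, Matrix.one_mul]
    calc trace (U * diagonal lam * star U * (U * diagonal lam * star U))
        = trace (U * (diagonal lam * (star U * (U * (diagonal lam * star U))))) := by
          simp only [Matrix.mul_assoc]
      _ = trace (U * (diagonal lam * (diagonal lam * star U))) := by rw [hmid]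
      _ = trace (diagonal lam * (diagonal lam * star U) * U) := trace_mul_comm _ _
      _ = trace (diagonal lam * diagonal lam * (star U * U)) := by
          simp only [Matrix.mul_assoc]
      _ = trace (diagonal lam * diagonal lam) := by rw [hU1, Matrix.mul_one]
      _ = ∑ i, lam i ^ 2 := by
          rw [diagonal_mul_diagonal, trace_diagonal]
          exact Finset.sum_congr rfl fun i _ => (sq (lam i)).symm
  have tB : trace (B * B) = ∑ i, kap i ^ 2 := by
    rw [hBspec]
    have hmid : star V * (V * (diagonal kap * star V)) = diagonal kap * star V := by
      rw [← Matrix.mul_assoc, hV1, Matrix.one_mul]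
    calc trace (V * diagonal kap * star V * (V * diagonal kap * star V))
        = trace (V * (diagonal kap * (star V * (V * (diagonal kap * star V))))) := by
          simp only [Matrix.mul_assoc]
      _ = trace (V * (diagonal kap * (diagonal kap * star V))) := by rw [hmid]
      _ = trace (diagonal kap * (diagonal kap * star V) * V) := trace_mul_comm _ _
      _ = trace (diagonal kap * diagonal kap * (star V * V)) := by
          simp only [Matrix.mul_assoc]
      _ = trace (diagonal kap * diagonal kap) := by rw [hV1, Matrix.mul_one]
      _ = ∑ i, kap i ^ 2 := by
          rw [diagonal_mul_diagonal, trace_diagonal]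
          exact Finset.sum_congr rfl fun i _ => (sq (kap i)).symm
  have tAB : trace (A * B) = ∑ i, ∑ j, lam i * kap j * s i j := by
    rw [hAspec, hBspec]
    calc trace (U * diagonal lam * star U * (V * diagonal kap * star V))
        = trace (U * (diagonal lam * (W * (diagonal kap * star V)))) := by
          rw [hWdef]; simp only [Matrix.mul_assoc]
      _ = trace (diagonal lam * (W * (diagonal kap * star V)) * U) := trace_mul_comm _ _
      _ = trace (diagonal lam * (W * (diagonal kap * (star V * U)))) := by
          simp only [Matrix.mul_assoc]
      _ = trace (diagonal lam * (W * (diagonal kap * star W))) := by rw [hstarW]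
      _ = ∑ i, ∑ j, lam i * kap j * s i j := by
          rw [Matrix.trace]
          refine Finset.sum_congr rfl fun i _ => ?_
          rw [Matrix.diag_apply, Matrix.diagonal_mul, Matrix.mul_apply, Finset.mul_sum]
          refine Finset.sum_congr rfl fun j _ => ?_
          rw [Matrix.diagonal_mul, Matrix.star_apply]
          simp only [hsdef, star_trivial]
          ring
  -- Frobenius norm
  have hM : (A - B).IsHermitian := hA.sub hB
  have frob : frobNorm (A - B) ^ 2 = trace ((A - B) * (A - B)) := by
    rw [frobNorm, Real.sq_sqrt]
    · rw [Matrix.trace]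
      refine Finset.sum_congr rfl fun i _ => ?_
      rw [Matrix.diag_apply, Matrix.mul_apply]
      refine Finset.sum_congr rfl fun j _ => ?_
      have hsym : (A - B) j i = (A - B) i j := by
        have := hM.apply i j
        rw [star_trivial] at this
        exact this
      rw [hsym, sq]
    · exact Finset.sum_nonneg fun i _ => Finset.sum_nonneg fun j _ => sq_nonneg _
  have texpand : trace ((A - B) * (A - B))
      = trace (A * A) - 2 * trace (A * B) + trace (B * B) := by
    rw [Matrix.sub_mul, Matrix.mul_sub, Matrix.mul_sub, Matrix.trace_sub, Matrix.trace_sub,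
      Matrix.trace_sub, trace_mul_comm B A]
    ring
  -- reindexing
  have hμ2 : ∑ i, μ i ^ 2 = ∑ i, lam i ^ 2 := by
    rw [hμ]
    exact Equiv.sum_comp σ (fun i => lam i ^ 2)
  have hν2 : ∑ i, ν i ^ 2 = ∑ i, kap i ^ 2 := by
    rw [hν]
    exact Equiv.sum_comp τ (fun i => kap i ^ 2)
  set s' : Matrix (Fin N) (Fin N) ℝ := fun i j => s (σ i) (τ j) with hs'def
  have hs' : ∀ i j, 0 ≤ s' i j := fun i j => hs _ _
  have hrow' : ∀ i, ∑ j, s' i j = 1 := by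
    intro i
    calc ∑ j, s' i j = ∑ j, s (σ i) j := Equiv.sum_comp τ (fun j => s (σ i) j)
      _ = 1 := hrow _
  have hcol' : ∀ j, ∑ i, s' i j = 1 := by
    intro j
    calc ∑ i, s' i j = ∑ i, s i (τ j) := Equiv.sum_comp σ (fun i => s i (τ j))
      _ = 1 := hcol _
  have tAB' : trace (A * B) = ∑ i, ∑ j, μ i * ν j * s' i j := by
    rw [tAB, hμ, hν]
    calc ∑ i, ∑ j, lam i * kap j * s i j
        = ∑ i, ∑ j, lam (σ i) * kap j * s (σ i) j :=
          (Equiv.sum_comp σ (fun i => ∑ j, lam i * kap j * s i j)).symm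
      _ = ∑ i, ∑ j, lam (σ i) * kap (τ j) * s (σ i) (τ j) :=
          Finset.sum_congr rfl fun i _ =>
            (Equiv.sum_comp τ (fun j => lam (σ i) * kap j * s (σ i) j)).symm
      _ = ∑ i, ∑ j, (lam ∘ σ) i * (kap ∘ τ) j * s' i j := rfl
  have main : ∑ i, ∑ j, μ i * ν j * s' i j ≤ ∑ i, μ i * ν i :=
    ds_rearrange μ ν hμ_sorted hν_sorted s' hs' hrow' hcol'
  have sqexpand : ∑ i : Fin N, (μ i - ν i) ^ 2
      = ∑ i, μ i ^ 2 + ∑ i, ν i ^ 2 - 2 * ∑ i, μ i * ν i := by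
    calc ∑ i : Fin N, (μ i - ν i) ^ 2
        = ∑ i, (μ i ^ 2 + ν i ^ 2 - 2 * (μ i * ν i)) :=
          Finset.sum_congr rfl fun i _ => by ring
      _ = ∑ i, μ i ^ 2 + ∑ i, ν i ^ 2 - 2 * ∑ i, μ i * ν i := by
          rw [Finset.sum_sub_distrib, Finset.sum_add_distrib, ← Finset.mul_sum]
  rw [frob, texpand, tA, tB, sqexpand, ← hμ2, ← hν2]
  have := tAB' ▸ main
  linarith
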